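/- If an area-preserving homeomorphism P of the annulus 𝕊¹ × [a,b] (preserving a finite measure with everywhere-positive density) maps a closed curve C = {(x, ψ(x)) : x ∈ 𝕊¹} (graph of a continuous function ψ with values in (a,b)) into the annulus, then P(C) ∩ C ≠ ∅. -/

import Mathlib

open MeasureTheory
open scoped ENNReal

namespace Stmt17Aux

local notation "X" => (AddCircle (1 : ℝ) × ℝ)

lemma fact01 : Fact ((0:ℝ) < 1) := ⟨one_pos⟩

/-- The open region strictly below the graph of `φ` is preconnected. -/
lemma conn_below (φ : AddCircle (1 : ℝ) → ℝ) (hφ : Continuous φ) :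
    IsPreconnected {z : X | z.2 < φ z.1} := by
  have hrange : {z : X | z.2 < φ z.1} =
      Set.range (fun p : ℝ × ℝ => (((p.1 : AddCircle (1:ℝ))), φ p.1 - Real.exp p.2)) := by
    ext z
    constructor
    · intro hz
      obtain ⟨x, hx⟩ := QuotientAddGroup.mk_surjective z.1
      refine ⟨(x, Real.log (φ z.1 - z.2)), ?_⟩
      have hpos : 0 < φ z.1 - z.2 := sub_pos.mpr hz
      have : (x : AddCircle (1:ℝ)) = z.1 := hx
      simp only [this, Real.exp_log hpos]
      exact Prod.ext rfl (by ring)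
    · rintro ⟨p, rfl⟩
      simpa using Real.exp_pos p.2
  rw [hrange]
  exact isPreconnected_range
    (((AddCircle.continuous_mk' (1:ℝ)).comp continuous_fst).prodMk
      (((hφ.comp (AddCircle.continuous_mk' (1:ℝ))).comp continuous_fst).sub
        (Real.continuous_exp.comp continuous_snd)))

/-- The open region strictly above the graph of `φ` is preconnected. -/
lemma conn_above (φ : AddCircle (1 : ℝ) → ℝ) (hφ : Continuous φ) :
    IsPreconnected {z : X | φ z.1 < z.2} := by
  have hrange : {z : X | φ z.1 < z.2} =
      Set.range (fun p : ℝ × ℝ => (((p.1 : AddCircle (1:ℝ))), φ p.1 + Real.exp p.2)) := by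
    ext z
    constructor
    · intro hz
      obtain ⟨x, hx⟩ := QuotientAddGroup.mk_surjective z.1
      refine ⟨(x, Real.log (z.2 - φ z.1)), ?_⟩
      have hpos : 0 < z.2 - φ z.1 := sub_pos.mpr hz
      have : (x : AddCircle (1:ℝ)) = z.1 := hx
      simp only [this, Real.exp_log hpos]
      exact Prod.ext rfl (by ring)
    · rintro ⟨p, rfl⟩
      simpa using Real.exp_pos p.2
  rw [hrange]
  exact isPreconnected_range
    (((AddCircle.continuous_mk' (1:ℝ)).comp continuous_fst).prodMk
      (((hφ.comp (AddCircle.continuous_mk' (1:ℝ))).comp continuous_fst).add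
        (Real.continuous_exp.comp continuous_snd)))

lemma mem_closure_above (φ : AddCircle (1 : ℝ) → ℝ) (hφ : Continuous φ)
    (x : AddCircle (1 : ℝ)) : ((x, φ x) : X) ∈ closure {z : X | φ z.1 < z.2} := by
  have htend : Filter.Tendsto (fun t : ℝ => ((x, φ x + t) : X))
      (nhdsWithin 0 (Set.Ioi 0)) (nhds ((x, φ x) : X)) := by
    have hcont : Continuous (fun t : ℝ => ((x, φ x + t) : X)) := by continuity
    have := hcont.tendsto 0
    simpa using this.mono_left nhdsWithin_le_nhds
  refine mem_closure_of_tendsto htend ?_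
  filter_upwards [self_mem_nhdsWithin] with t ht
  simpa using (lt_add_of_pos_right (φ x) ht)

lemma mem_closure_below (φ : AddCircle (1 : ℝ) → ℝ) (hφ : Continuous φ)
    (x : AddCircle (1 : ℝ)) : ((x, φ x) : X) ∈ closure {z : X | z.2 < φ z.1} := by
  have htend : Filter.Tendsto (fun t : ℝ => ((x, φ x - t) : X))
      (nhdsWithin 0 (Set.Ioi 0)) (nhds ((x, φ x) : X)) := by
    have hcont : Continuous (fun t : ℝ => ((x, φ x - t) : X)) := by continuity
    have := hcont.tendsto 0
    simpa using this.mono_left nhdsWithin_le_nhds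
  refine mem_closure_of_tendsto htend ?_
  filter_upwards [self_mem_nhdsWithin] with t ht
  simpa using (sub_lt_self (φ x) ht)

/-- A preconnected set in the complement of the annulus maps into the
component whose closure the image of a chosen boundary point avoids. -/
lemma side_of (P : X ≃ₜ X) (A : Set X) (hPA : ⇑P '' A = A)
    {u v S : Set X} (hu : IsOpen u) (hv : IsOpen v) (huv : Disjoint u v)
    (hAc : Aᶜ = u ∪ v) (hS : IsPreconnected S) (hSA : S ⊆ Aᶜ)
    (p : X) (hp : p ∈ closure S) (hPpv : P p ∉ closure v) : ⇑P '' S ⊆ u := by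
  have hPAc : ⇑P '' Aᶜ = Aᶜ := by rw [Set.image_compl_eq P.bijective, hPA]
  have hsub : ⇑P '' S ⊆ u ∪ v := by
    rw [← hAc, ← hPAc]; exact Set.image_mono hSA
  have hpre : IsPreconnected (⇑P '' S) := hS.image _ P.continuous.continuousOn
  rcases hpre.subset_or_subset hu hv huv hsub with h | h
  · exact h
  · exfalso
    apply hPpv
    have h1 : P p ∈ closure (⇑P '' S) := by
      rw [← P.image_closure]; exact ⟨p, hp, rfl⟩
    exact closure_mono h h1

lemma image_low (a b : ℝ) (hab : a < b) (P : X ≃ₜ X)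
    (A : Set X) (hA : A = {z : X | z.2 ∈ Set.Icc a b}) (hPA : ⇑P '' A = A)
    (hbda : ⇑P '' {z : X | z.2 = a} ⊆ {z | z.2 = a}) :
    ⇑P '' {z : X | z.2 < a} ⊆ {z : X | z.2 < a} := by
  have hAc : Aᶜ = {z : X | z.2 < a} ∪ {z : X | b < z.2} := by
    rw [hA]; ext z
    simp only [Set.mem_compl_iff, Set.mem_setOf_eq, Set.mem_Icc, Set.mem_union, not_and_or,
      not_le]
  have hclv : closure {z : X | b < z.2} ⊆ {z : X | b ≤ z.2} :=
    closure_minimal (fun z (hz : b < z.2) => le_of_lt hz) (isClosed_le continuous_const continuous_snd)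
  refine side_of P A hPA (isOpen_lt continuous_snd continuous_const)
    (isOpen_lt continuous_const continuous_snd) ?_ hAc
    (conn_below (fun _ => a) continuous_const) ?_ ((0 : AddCircle (1:ℝ)), a) ?_ ?_
  · rw [Set.disjoint_left]
    intro z h1 h2
    simp only [Set.mem_setOf_eq] at h1 h2
    linarith
  · intro z hz
    rw [hAc]; exact Or.inl hz
  · exact mem_closure_below (fun _ => a) continuous_const 0
  · intro hmem
    have hPa : (P ((0 : AddCircle (1:ℝ)), a)).2 = a := hbda ⟨_, rfl, rfl⟩
    have h2 := hclv hmem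
    rw [Set.mem_setOf_eq, hPa] at h2
    linarith

lemma image_high (a b : ℝ) (hab : a < b) (P : X ≃ₜ X)
    (A : Set X) (hA : A = {z : X | z.2 ∈ Set.Icc a b}) (hPA : ⇑P '' A = A)
    (hbdb : ⇑P '' {z : X | z.2 = b} ⊆ {z | z.2 = b}) :
    ⇑P '' {z : X | b < z.2} ⊆ {z : X | b < z.2} := by
  have hAc : Aᶜ = {z : X | b < z.2} ∪ {z : X | z.2 < a} := by
    rw [hA]; ext z
    simp only [Set.mem_compl_iff, Set.mem_setOf_eq, Set.mem_Icc, Set.mem_union, not_and_or,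
      not_le]
    tauto
  have hclv : closure {z : X | z.2 < a} ⊆ {z : X | z.2 ≤ a} :=
    closure_minimal (fun z (hz : z.2 < a) => le_of_lt hz) (isClosed_le continuous_snd continuous_const)
  refine side_of P A hPA (isOpen_lt continuous_const continuous_snd)
    (isOpen_lt continuous_snd continuous_const) ?_ hAc
    (conn_above (fun _ => b) continuous_const) ?_ ((0 : AddCircle (1:ℝ)), b) ?_ ?_
  · rw [Set.disjoint_left]
    intro z h1 h2
    simp only [Set.mem_setOf_eq] at h1 h2
    linarith
  · intro z hz
    rw [hAc]; exact Or.inl hz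
  · exact mem_closure_above (fun _ => b) continuous_const 0
  · intro hmem
    have hPb : (P ((0 : AddCircle (1:ℝ)), b)).2 = b := hbdb ⟨_, rfl, rfl⟩
    have h2 := hclv hmem
    rw [Set.mem_setOf_eq, hPb] at h2
    linarith

/-- Positivity of the weighted measure on nonempty open sets. -/
lemma omega_pos (ρ : X → ℝ) (hρc : Continuous ρ) (hρpos : ∀ z, 0 < ρ z)
    {U : Set X} (hU : IsOpen U) (hne : U.Nonempty) :
    0 < (volume.withDensity fun z => ENNReal.ofReal (ρ z)) U := by
  haveI : Fact ((0:ℝ) < 1) := fact01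
  obtain ⟨z₀, hz₀⟩ := hne
  set ε := ρ z₀ / 2 with hε
  have hεpos : 0 < ε := by have := hρpos z₀; positivity
  set U' := U ∩ ρ ⁻¹' Set.Ioi ε with hU'
  have hU'open : IsOpen U' := hU.inter (isOpen_Ioi.preimage hρc)
  have hz₀' : z₀ ∈ U' := ⟨hz₀, by simp [hε]; linarith [hρpos z₀]⟩
  have hvol : 0 < volume U' := hU'open.measure_pos _ ⟨z₀, hz₀'⟩
  rw [withDensity_apply _ hU.measurableSet]
  calc (0 : ℝ≥0∞) < ENNReal.ofReal ε * volume U' := by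
        exact ENNReal.mul_pos (by simp [ENNReal.ofReal_pos, hεpos]) hvol.ne'
    _ = ∫⁻ _ in U', ENNReal.ofReal ε ∂volume := (setLIntegral_const _ _).symm
    _ ≤ ∫⁻ z in U', ENNReal.ofReal (ρ z) ∂volume := by
        refine setLIntegral_mono' hU'open.measurableSet fun z hz => ?_
        exact ENNReal.ofReal_le_ofReal (le_of_lt hz.2)
    _ ≤ ∫⁻ z in U, ENNReal.ofReal (ρ z) ∂volume :=
        lintegral_mono_set (Set.inter_subset_left)

/-- The annulus has finite weighted measure. -/
lemma omega_A_ne_top (a b : ℝ) (hab : a < b) (ρ : X → ℝ) (hρc : Continuous ρ) :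
    (volume.withDensity fun z => ENNReal.ofReal (ρ z)) {z : X | z.2 ∈ Set.Icc a b} ≠ ⊤ := by
  haveI : Fact ((0:ℝ) < 1) := fact01
  set A := {z : X | z.2 ∈ Set.Icc a b} with hAdef
  have hAeq : A = (Set.univ : Set (AddCircle (1:ℝ))) ×ˢ Set.Icc a b := by
    ext z; simp [hAdef, Set.mem_prod]
  have hAcl : IsClosed A := by
    rw [hAeq]; exact isClosed_univ.prod isClosed_Icc
  have hAcomp : IsCompact A := by
    rw [hAeq]; exact isCompact_univ.prod isCompact_Icc
  have hAne : A.Nonempty := ⟨((0 : AddCircle (1:ℝ)), a), by simp [hAdef, le_of_lt hab]⟩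
  obtain ⟨zM, _, hM⟩ := hAcomp.exists_isMaxOn hAne hρc.continuousOn
  have hvolA : volume A ≠ ⊤ := by
    rw [hAeq, Measure.volume_eq_prod, Measure.prod_prod]
    exact ENNReal.mul_ne_top (by simp [AddCircle.measure_univ]) (by simp)
  rw [withDensity_apply _ hAcl.measurableSet]
  have hbound : ∫⁻ z in A, ENNReal.ofReal (ρ z) ∂volume
      ≤ ∫⁻ _ in A, ENNReal.ofReal (ρ zM) ∂volume := by
    refine setLIntegral_mono' hAcl.measurableSet fun z hz => ?_
    exact ENNReal.ofReal_le_ofReal (hM hz)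
  refine ne_top_of_le_ne_top ?_ hbound
  rw [setLIntegral_const]
  exact ENNReal.mul_ne_top ENNReal.ofReal_ne_top hvolA

/-- Key measure-theoretic contradiction: a measure-preserving homeomorphism
cannot strictly shrink a finite-measure set, leaving out a set of positive
measure. -/
lemma no_strict_shrink (ω : Measure X) (P : X ≃ₜ X)
    (hωinv : ∀ S : Set X, MeasurableSet S → ω (⇑P ⁻¹' S) = ω S)
    (S O : Set X) (hSfin : ω S ≠ ⊤) (hPS : ⇑P '' S ⊆ S)
    (hPSm : MeasurableSet (⇑P '' S)) (hO : O ⊆ S)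
    (hOpos : 0 < ω O) (hdisj : Disjoint O (⇑P '' S)) : False := by
  have h1 : ω S = ω (⇑P '' S) := by
    rw [← hωinv _ hPSm, Set.preimage_image_eq _ P.injective]
  have h2 : ω (O ∪ ⇑P '' S) = ω O + ω (⇑P '' S) := measure_union hdisj hPSm
  have h3 : ω (O ∪ ⇑P '' S) ≤ ω S := measure_mono (Set.union_subset hO hPS)
  rw [h2, ← h1] at h3
  have h4 : ω S < ω O + ω S := by
    have := ENNReal.lt_add_right hSfin hOpos.ne'
    rwa [add_comm] at this
  exact absurd (lt_of_lt_of_le h4 h3) (lt_irrefl _)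

end Stmt17Aux

open Stmt17Aux

/-- Curve-intersection property: a homeomorphism P of 𝕊¹ × ℝ that maps the
annulus A = 𝕊¹ × [a,b] onto itself, preserves each boundary circle, and
preserves a measure ω with everywhere-positive continuous density, must map
any closed curve C that is the graph of a continuous ψ : 𝕊¹ → (a,b) to a
curve meeting C. -/
theorem stmt_17 (a b : ℝ) (hab : a < b)
    (P : (AddCircle (1 : ℝ) × ℝ) ≃ₜ (AddCircle (1 : ℝ) × ℝ))
    (A : Set (AddCircle (1 : ℝ) × ℝ)) (hA : A = {z | z.2 ∈ Set.Icc a b})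
    (hPA : ⇑P '' A = A)
    (hbda : ⇑P '' {z : AddCircle (1 : ℝ) × ℝ | z.2 = a} ⊆ {z | z.2 = a})
    (hbdb : ⇑P '' {z : AddCircle (1 : ℝ) × ℝ | z.2 = b} ⊆ {z | z.2 = b})
    (ρ : (AddCircle (1 : ℝ) × ℝ) → ℝ) (hρc : Continuous ρ)
    (hρpos : ∀ z, 0 < ρ z)
    (ω : Measure (AddCircle (1 : ℝ) × ℝ))
    (hω : ω = volume.withDensity (fun z => ENNReal.ofReal (ρ z)))
    (hωinv : ∀ S : Set (AddCircle (1 : ℝ) × ℝ), MeasurableSet S →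
      ω (⇑P ⁻¹' S) = ω S)
    (ψ : AddCircle (1 : ℝ) → ℝ) (hψ : Continuous ψ)
    (hψmem : ∀ x, ψ x ∈ Set.Ioo a b) :
    (⇑P '' {z : AddCircle (1 : ℝ) × ℝ | z.2 = ψ z.1} ∩
      {z : AddCircle (1 : ℝ) × ℝ | z.2 = ψ z.1}).Nonempty := by
  by_contra hcon
  rw [Set.not_nonempty_iff_eq_empty] at hcon
  set C : Set (AddCircle (1 : ℝ) × ℝ) := {z | z.2 = ψ z.1} with hC
  have hAcl : IsClosed A := by
    rw [hA]; exact IsClosed.preimage continuous_snd isClosed_Icc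
  have hCpre : IsPreconnected C := by
    have hrange : C = Set.range (fun t : ℝ => (((t : AddCircle (1:ℝ))), ψ t)) := by
      ext z
      constructor
      · intro hz
        obtain ⟨x, hx⟩ := QuotientAddGroup.mk_surjective z.1
        refine ⟨x, ?_⟩
        show ((x : AddCircle (1:ℝ)), ψ x) = z
        rw [hx]
        exact Prod.ext rfl hz.symm
      · rintro ⟨t, rfl⟩; exact rfl
    rw [hrange]
    exact isPreconnected_range ((AddCircle.continuous_mk' (1:ℝ)).prodMk
      (hψ.comp (AddCircle.continuous_mk' (1:ℝ))))
  have hopenL : IsOpen {z : AddCircle (1:ℝ) × ℝ | z.2 < ψ z.1} :=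
    isOpen_lt continuous_snd (hψ.comp continuous_fst)
  have hopenU : IsOpen {z : AddCircle (1:ℝ) × ℝ | ψ z.1 < z.2} :=
    isOpen_lt (hψ.comp continuous_fst) continuous_snd
  have hPCsub : ⇑P '' C ⊆ {z | z.2 < ψ z.1} ∪ {z | ψ z.1 < z.2} := by
    intro z hz
    rcases lt_trichotomy z.2 (ψ z.1) with h | h | h
    · exact Or.inl h
    · exact absurd (Set.mem_inter hz h) (by rw [hcon]; exact Set.notMem_empty z)
    · exact Or.inr h
  have hdisjLU : Disjoint {z : AddCircle (1:ℝ) × ℝ | z.2 < ψ z.1} {z | ψ z.1 < z.2} := by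
    rw [Set.disjoint_left]
    intro z h1 h2
    simp only [Set.mem_setOf_eq] at h1 h2
    linarith
  rcases (hCpre.image _ P.continuous.continuousOn).subset_or_subset hopenL hopenU
    hdisjLU hPCsub with hside | hside
  · -- P(C) lies strictly below the curve
    set D : Set (AddCircle (1:ℝ) × ℝ) := {z | z.2 ≤ ψ z.1} with hD
    have hDcl : IsClosed D := isClosed_le continuous_snd (hψ.comp continuous_fst)
    have hPDcl : IsClosed (⇑P '' D) := P.isClosedMap D hDcl
    have hfr : frontier (⇑P '' D) ⊆ ⇑P '' C := by
      rw [← P.image_frontier]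
      exact Set.image_mono (frontier_le_subset_eq continuous_snd (hψ.comp continuous_fst))
    have hfrL : frontier (⇑P '' D) ⊆ {z | z.2 < ψ z.1} := fun z hz => hside (hfr hz)
    set z₀ : AddCircle (1:ℝ) × ℝ := ((0 : AddCircle (1:ℝ)), b + 1) with hz₀def
    have hz₀D : z₀ ∉ ⇑P '' D := by
      rintro ⟨w, hw, hPw⟩
      have hwb : w.2 < b := lt_of_le_of_lt hw (hψmem w.1).2
      have hz₀A : z₀ ∉ A := by
        rw [hA]; simp only [Set.mem_setOf_eq, Set.mem_Icc, hz₀def, not_and, not_le]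
        intro _; linarith
      have hwA : w ∉ A := fun h => hz₀A (by rw [← hPw, ← hPA]; exact ⟨w, h, rfl⟩)
      have hwa : w.2 < a := by
        rw [hA] at hwA
        simp only [Set.mem_setOf_eq, Set.mem_Icc, not_and, not_le] at hwA
        by_contra hcontra
        push_neg at hcontra
        exact absurd (hwA hcontra) (by linarith)
      have hlow := image_low a b hab P A hA hPA hbda ⟨w, hwa, rfl⟩
      rw [hPw] at hlow
      simp only [Set.mem_setOf_eq, hz₀def] at hlow
      linarith
    set W : Set (AddCircle (1:ℝ) × ℝ) := {z | ψ z.1 < z.2} with hW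
    have hWD : W ⊆ (⇑P '' D)ᶜ := by
      have hcover : W ⊆ (⇑P '' D)ᶜ ∪ interior (⇑P '' D) := by
        intro z hz
        by_cases hzP : z ∈ ⇑P '' D
        · right
          have hznf : z ∉ frontier (⇑P '' D) := by
            intro h
            have h1 := hfrL h
            simp only [Set.mem_setOf_eq] at h1
            simp only [hW, Set.mem_setOf_eq] at hz
            linarith
          rw [hPDcl.frontier_eq] at hznf
          by_contra h'
          exact hznf ⟨hzP, h'⟩
        · left; exact hzP
      have hdisj2 : Disjoint (⇑P '' D)ᶜ (interior (⇑P '' D)) :=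
        Set.disjoint_left.mpr (fun z hz1 hz2 => hz1 (interior_subset hz2))
      rcases (conn_above ψ hψ).subset_or_subset hPDcl.isOpen_compl isOpen_interior
        hdisj2 hcover with h | h
      · exact h
      · exfalso
        have hz₀W : z₀ ∈ W := by
          simp only [hW, Set.mem_setOf_eq, hz₀def]
          have := (hψmem 0).2; linarith
        exact hz₀D (interior_subset (h hz₀W))
    have hCD : ∀ c ∈ C, c ∉ ⇑P '' D := by
      intro c hc hcP
      have hcint : c ∈ interior (⇑P '' D) := by
        by_contra h'
        have hfr2 : c ∈ frontier (⇑P '' D) := by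
          rw [hPDcl.frontier_eq]; exact ⟨hcP, h'⟩
        have h1 := hfrL hfr2
        simp only [Set.mem_setOf_eq] at h1
        have h2 : c.2 = ψ c.1 := hc
        linarith
      have hccl : c ∈ closure W := by
        have h0 := mem_closure_above ψ hψ c.1
        have hce : c = (c.1, ψ c.1) := Prod.ext rfl hc
        rw [hce]; exact h0
      rw [mem_closure_iff] at hccl
      obtain ⟨w, hw1, hw2⟩ := hccl _ isOpen_interior hcint
      exact (hWD hw2) (interior_subset hw1)
    set Da := D ∩ A with hDa
    have hDacl : IsClosed Da := hDcl.inter hAcl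
    have hPDacl : IsClosed (⇑P '' Da) := P.isClosedMap Da hDacl
    have hPDaD : ⇑P '' Da ⊆ ⇑P '' D := Set.image_mono Set.inter_subset_left
    have hPDaA : ⇑P '' Da ⊆ A := by
      rw [← hPA]; exact Set.image_mono Set.inter_subset_right
    have hPDaDa : ⇑P '' Da ⊆ Da := by
      intro z hz
      refine ⟨?_, hPDaA hz⟩
      have hnW : z ∉ W := fun hWz => (hWD hWz) (hPDaD hz)
      simp only [hW, Set.mem_setOf_eq, not_lt] at hnW
      exact hnW
    set c0 : AddCircle (1:ℝ) × ℝ := ((0 : AddCircle (1:ℝ)), ψ 0) with hc0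
    have hc0C : c0 ∈ C := rfl
    have hc0P : c0 ∉ ⇑P '' Da := fun h => hCD c0 hc0C (hPDaD h)
    have hVopen : IsOpen (⇑P '' Da)ᶜ := hPDacl.isOpen_compl
    have htend : Filter.Tendsto (fun t : ℝ => (((0 : AddCircle (1:ℝ)), ψ 0 - t)))
        (nhdsWithin 0 (Set.Ioi 0)) (nhds c0) := by
      have hcont : Continuous (fun t : ℝ => (((0 : AddCircle (1:ℝ)), ψ 0 - t))) :=
        continuous_const.prodMk (continuous_const.sub continuous_id)
      have h0 := hcont.tendsto 0
      simpa [hc0] using h0.mono_left nhdsWithin_le_nhds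
    have hev1 : ∀ᶠ t in nhdsWithin 0 (Set.Ioi 0),
        ((0 : AddCircle (1:ℝ)), ψ 0 - t) ∈ (⇑P '' Da)ᶜ :=
      htend.eventually_mem (hVopen.mem_nhds hc0P)
    have hev2 : ∀ᶠ t in nhdsWithin 0 (Set.Ioi 0), t < ψ 0 - a := by
      apply Filter.Eventually.filter_mono nhdsWithin_le_nhds
      have h0 : (0:ℝ) ∈ Set.Iio (ψ 0 - a) := by
        simp only [Set.mem_Iio]; have := (hψmem 0).1; linarith
      exact isOpen_Iio.eventually_mem h0
    obtain ⟨t, htV, hta, htpos⟩ := (hev1.and (hev2.and self_mem_nhdsWithin)).exists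
    replace htpos : (0:ℝ) < t := htpos
    set O := (⇑P '' Da)ᶜ ∩ ({z : AddCircle (1:ℝ) × ℝ | a < z.2} ∩ {z | z.2 < ψ z.1}) with hO
    have hOopen : IsOpen O :=
      hVopen.inter ((isOpen_lt continuous_const continuous_snd).inter hopenL)
    have hOne : O.Nonempty := by
      refine ⟨((0 : AddCircle (1:ℝ)), ψ 0 - t), htV, ?_, ?_⟩
      · simp only [Set.mem_setOf_eq]; linarith
      · simp only [Set.mem_setOf_eq]; linarith
    have hOsub : O ⊆ Da := by
      rintro z ⟨_, hz2, hz3⟩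
      simp only [Set.mem_setOf_eq] at hz2 hz3
      refine ⟨le_of_lt hz3, ?_⟩
      rw [hA]
      exact ⟨le_of_lt hz2, le_of_lt (lt_trans hz3 (hψmem z.1).2)⟩
    have hOdisj : Disjoint O (⇑P '' Da) := Set.disjoint_left.mpr (fun z hz h => hz.1 h)
    exact no_strict_shrink ω P hωinv Da O
      (by rw [hω]
          exact ne_top_of_le_ne_top (omega_A_ne_top a b hab ρ hρc)
            (measure_mono (show Da ⊆ {z : AddCircle (1:ℝ) × ℝ | z.2 ∈ Set.Icc a b} by
              rw [← hA]; exact Set.inter_subset_right)))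
      hPDaDa hPDacl.measurableSet hOsub
      (by rw [hω]; exact omega_pos ρ hρc hρpos hOopen hOne) hOdisj
  · -- P(C) lies strictly above the curve
    set D : Set (AddCircle (1:ℝ) × ℝ) := {z | ψ z.1 ≤ z.2} with hD
    have hDcl : IsClosed D := isClosed_le (hψ.comp continuous_fst) continuous_snd
    have hPDcl : IsClosed (⇑P '' D) := P.isClosedMap D hDcl
    have hfr : frontier (⇑P '' D) ⊆ ⇑P '' C := by
      rw [← P.image_frontier]
      refine Set.image_mono ?_
      intro z hz
      exact ((frontier_le_subset_eq (hψ.comp continuous_fst) continuous_snd) hz).symm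
    have hfrU : frontier (⇑P '' D) ⊆ {z | ψ z.1 < z.2} := fun z hz => hside (hfr hz)
    set z₀ : AddCircle (1:ℝ) × ℝ := ((0 : AddCircle (1:ℝ)), a - 1) with hz₀def
    have hz₀D : z₀ ∉ ⇑P '' D := by
      rintro ⟨w, hw, hPw⟩
      have hwa : a < w.2 := lt_of_lt_of_le (hψmem w.1).1 hw
      have hz₀A : z₀ ∉ A := by
        rw [hA]; simp only [Set.mem_setOf_eq, Set.mem_Icc, hz₀def, not_and, not_le]
        intro h; linarith
      have hwA : w ∉ A := fun h => hz₀A (by rw [← hPw, ← hPA]; exact ⟨w, h, rfl⟩)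
      have hwb : b < w.2 := by
        rw [hA] at hwA
        simp only [Set.mem_setOf_eq, Set.mem_Icc, not_and, not_le] at hwA
        exact hwA (by linarith)
      have hhigh := image_high a b hab P A hA hPA hbdb ⟨w, hwb, rfl⟩
      rw [hPw] at hhigh
      simp only [Set.mem_setOf_eq, hz₀def] at hhigh
      linarith
    set W : Set (AddCircle (1:ℝ) × ℝ) := {z | z.2 < ψ z.1} with hW
    have hWD : W ⊆ (⇑P '' D)ᶜ := by
      have hcover : W ⊆ (⇑P '' D)ᶜ ∪ interior (⇑P '' D) := by
        intro z hz
        by_cases hzP : z ∈ ⇑P '' D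
        · right
          have hznf : z ∉ frontier (⇑P '' D) := by
            intro h
            have h1 := hfrU h
            simp only [Set.mem_setOf_eq] at h1
            simp only [hW, Set.mem_setOf_eq] at hz
            linarith
          rw [hPDcl.frontier_eq] at hznf
          by_contra h'
          exact hznf ⟨hzP, h'⟩
        · left; exact hzP
      have hdisj2 : Disjoint (⇑P '' D)ᶜ (interior (⇑P '' D)) :=
        Set.disjoint_left.mpr (fun z hz1 hz2 => hz1 (interior_subset hz2))
      rcases (conn_below ψ hψ).subset_or_subset hPDcl.isOpen_compl isOpen_interior
        hdisj2 hcover with h | h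
      · exact h
      · exfalso
        have hz₀W : z₀ ∈ W := by
          simp only [hW, Set.mem_setOf_eq, hz₀def]
          have := (hψmem 0).1; linarith
        exact hz₀D (interior_subset (h hz₀W))
    have hCD : ∀ c ∈ C, c ∉ ⇑P '' D := by
      intro c hc hcP
      have hcint : c ∈ interior (⇑P '' D) := by
        by_contra h'
        have hfr2 : c ∈ frontier (⇑P '' D) := by
          rw [hPDcl.frontier_eq]; exact ⟨hcP, h'⟩
        have h1 := hfrU hfr2
        simp only [Set.mem_setOf_eq] at h1
        have h2 : c.2 = ψ c.1 := hc
        linarith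
      have hccl : c ∈ closure W := by
        have h0 := mem_closure_below ψ hψ c.1
        have hce : c = (c.1, ψ c.1) := Prod.ext rfl hc
        rw [hce]; exact h0
      rw [mem_closure_iff] at hccl
      obtain ⟨w, hw1, hw2⟩ := hccl _ isOpen_interior hcint
      exact (hWD hw2) (interior_subset hw1)
    set Da := D ∩ A with hDa
    have hDacl : IsClosed Da := hDcl.inter hAcl
    have hPDacl : IsClosed (⇑P '' Da) := P.isClosedMap Da hDacl
    have hPDaD : ⇑P '' Da ⊆ ⇑P '' D := Set.image_mono Set.inter_subset_left
    have hPDaA : ⇑P '' Da ⊆ A := by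
      rw [← hPA]; exact Set.image_mono Set.inter_subset_right
    have hPDaDa : ⇑P '' Da ⊆ Da := by
      intro z hz
      refine ⟨?_, hPDaA hz⟩
      have hnW : z ∉ W := fun hWz => (hWD hWz) (hPDaD hz)
      simp only [hW, Set.mem_setOf_eq, not_lt] at hnW
      exact hnW
    set c0 : AddCircle (1:ℝ) × ℝ := ((0 : AddCircle (1:ℝ)), ψ 0) with hc0
    have hc0C : c0 ∈ C := rfl
    have hc0P : c0 ∉ ⇑P '' Da := fun h => hCD c0 hc0C (hPDaD h)
    have hVopen : IsOpen (⇑P '' Da)ᶜ := hPDacl.isOpen_compl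
    have htend : Filter.Tendsto (fun t : ℝ => (((0 : AddCircle (1:ℝ)), ψ 0 + t)))
        (nhdsWithin 0 (Set.Ioi 0)) (nhds c0) := by
      have hcont : Continuous (fun t : ℝ => (((0 : AddCircle (1:ℝ)), ψ 0 + t))) :=
        continuous_const.prodMk (continuous_const.add continuous_id)
      have h0 := hcont.tendsto 0
      simpa [hc0] using h0.mono_left nhdsWithin_le_nhds
    have hev1 : ∀ᶠ t in nhdsWithin 0 (Set.Ioi 0),
        ((0 : AddCircle (1:ℝ)), ψ 0 + t) ∈ (⇑P '' Da)ᶜ :=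
      htend.eventually_mem (hVopen.mem_nhds hc0P)
    have hev2 : ∀ᶠ t in nhdsWithin 0 (Set.Ioi 0), t < b - ψ 0 := by
      apply Filter.Eventually.filter_mono nhdsWithin_le_nhds
      have h0 : (0:ℝ) ∈ Set.Iio (b - ψ 0) := by
        simp only [Set.mem_Iio]; have := (hψmem 0).2; linarith
      exact isOpen_Iio.eventually_mem h0
    obtain ⟨t, htV, htb, htpos⟩ := (hev1.and (hev2.and self_mem_nhdsWithin)).exists
    replace htpos : (0:ℝ) < t := htpos
    set O := (⇑P '' Da)ᶜ ∩ ({z : AddCircle (1:ℝ) × ℝ | z.2 < b} ∩ {z | ψ z.1 < z.2}) with hO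
    have hOopen : IsOpen O :=
      hVopen.inter ((isOpen_lt continuous_snd continuous_const).inter hopenU)
    have hOne : O.Nonempty := by
      refine ⟨((0 : AddCircle (1:ℝ)), ψ 0 + t), htV, ?_, ?_⟩
      · simp only [Set.mem_setOf_eq]; linarith
      · simp only [Set.mem_setOf_eq]; linarith
    have hOsub : O ⊆ Da := by
      rintro z ⟨_, hz2, hz3⟩
      simp only [Set.mem_setOf_eq] at hz2 hz3
      refine ⟨le_of_lt hz3, ?_⟩
      rw [hA]
      exact ⟨le_of_lt (lt_trans (hψmem z.1).1 hz3), le_of_lt hz2⟩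
    have hOdisj : Disjoint O (⇑P '' Da) := Set.disjoint_left.mpr (fun z hz h => hz.1 h)
    exact no_strict_shrink ω P hωinv Da O
      (by rw [hω]
          exact ne_top_of_le_ne_top (omega_A_ne_top a b hab ρ hρc)
            (measure_mono (show Da ⊆ {z : AddCircle (1:ℝ) × ℝ | z.2 ∈ Set.Icc a b} by
              rw [← hA]; exact Set.inter_subset_right)))
      hPDaDa hPDacl.measurableSet hOsub
      (by rw [hω]; exact omega_pos ρ hρc hρpos hOopen hOne) hOdisj
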